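/- For every classical knot diagram (Gauss diagram realizable in the plane), every crossing c satisfies N(c) = 1; consequently Σ_{c} w(c) t^{N(c)} = w(K)·t where w(K) is the writhe, and the invariant F_K(t) = Σ_c w(c) t^{N(c)} − w(K)t is identically zero on classical knots. -/

import Mathlib

open Finset LaurentPolynomial

/-- A signed, oriented chord diagram (combinatorial Gauss diagram) with `n` chords:
the `2*n` chord endpoints on the circle are the elements of `Fin (2*n)` in (positive)
cyclic order; chord `i` has over endpoint `c⁺ = ep (i, true)`, under endpoint
`c⁻ = ep (i, false)` and a sign (writhe) `sign i ∈ {1, -1}`. -/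
structure ChordDiagram (n : ℕ) where
  ep : Fin n × Bool ≃ Fin (2 * n)
  sign : Fin n → ℤ
  sign_unit : ∀ i, sign i = 1 ∨ sign i = -1

namespace ChordDiagram

variable {n : ℕ}

/-- the over endpoint `c⁺` of a chord -/
def over' (D : ChordDiagram n) (i : Fin n) : Fin (2 * n) := D.ep (i, true)

/-- the under endpoint `c⁻` of a chord -/
def under (D : ChordDiagram n) (i : Fin n) : Fin (2 * n) := D.ep (i, false)

/-- the number of steps from `b` to `x`, travelling in the positive direction
around the circle -/
def relpos (b x : Fin (2 * n)) : ℕ := (x.val + 2 * n - b.val) % (2 * n)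

/-- `x` lies strictly between the endpoints of chord `i`, on the side swept out
going from `c⁺` to `c⁻` in the positive direction -/
def StrictlyBetween (D : ChordDiagram n) (i : Fin n) (x : Fin (2 * n)) : Prop :=
  0 < relpos (D.over' i) x ∧ relpos (D.over' i) x < relpos (D.over' i) (D.under i)

instance (D : ChordDiagram n) (i : Fin n) (x : Fin (2 * n)) :
    Decidable (D.StrictlyBetween i x) := inferInstanceAs (Decidable (_ ∧ _))

/-- two distinct chords interlink if their endpoints alternate around the circle,
i.e. exactly one endpoint of `j` lies strictly between the endpoints of `i` -/
def Interlinks (D : ChordDiagram n) (i j : Fin n) : Prop :=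
  i ≠ j ∧ Xor' (D.StrictlyBetween i (D.over' j)) (D.StrictlyBetween i (D.under j))

instance (D : ChordDiagram n) (i j : Fin n) : Decidable (D.Interlinks i j) :=
  inferInstanceAs (Decidable (_ ∧ Xor _ _))

/-- the number of chords interlinking chord `i` -/
def interlinkCount (D : ChordDiagram n) (i : Fin n) : ℕ :=
  (univ.filter fun j => D.Interlinks i j).card

/-- the number of chord endpoints lying (strictly) on one side of chord `i` -/
def sideCount (D : ChordDiagram n) (i : Fin n) : ℕ :=
  (univ.filter fun x => D.StrictlyBetween i x).card

/-- a chord is odd if it interlinks an odd number of other chords -/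
def OddChord (D : ChordDiagram n) (i : Fin n) : Prop := Odd (D.interlinkCount i)

instance (D : ChordDiagram n) (i : Fin n) : Decidable (D.OddChord i) :=
  inferInstanceAs (Decidable (Odd _))

/-- The label `N(a)` of the arc whose terminal point is `a`: the sum of the signs of
all chords whose over endpoint is met strictly before their under endpoint when
traversing the circle once in the positive direction starting inside this arc. -/
def arcLabel (D : ChordDiagram n) (a : Fin (2 * n)) : ℤ :=
  ∑ i ∈ univ.filter fun i => relpos a (D.over' i) < relpos a (D.under i), D.sign i

/-- The value `N(c)` of a chord: for a positive chord, the difference `x - y` of the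
arc labels just before `c⁺` and just before `c⁻`; for a negative chord, the difference
`z - w` of the arc labels just after `c⁺` and just after `c⁻` (the label just after an
over endpoint is the label just before it minus the sign, and the label just after an
under endpoint is the label just before it plus the sign). -/
def chordVal (D : ChordDiagram n) (i : Fin n) : ℤ :=
  if D.sign i = 1 then D.arcLabel (D.over' i) - D.arcLabel (D.under i)
  else (D.arcLabel (D.over' i) - D.sign i) - (D.arcLabel (D.under i) + D.sign i)

/-- the odd writhe `J(K) = Σ_{c odd} w(c)` -/
def oddWrithe (D : ChordDiagram n) : ℤ :=
  ∑ i ∈ univ.filter fun i => D.OddChord i, D.sign i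

/-- the odd writhe polynomial `f_K(t) = Σ_{c odd} w(c) · t^{N(c)} ∈ ℤ[t,t⁻¹]` -/
noncomputable def owp (D : ChordDiagram n) : LaurentPolynomial ℤ :=
  ∑ i ∈ univ.filter fun i => D.OddChord i, C (D.sign i) * T (D.chordVal i)

/-- evaluation of the odd writhe polynomial at a rational number `x`:
`Σ_{c odd} w(c) · x^{N(c)}` -/
def owpEval (D : ChordDiagram n) (x : ℚ) : ℚ :=
  ∑ i ∈ univ.filter fun i => D.OddChord i, (D.sign i : ℚ) * x ^ D.chordVal i

/-- the coefficient of `t^k` in a Laurent polynomial -/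
def coeffOf (f : LaurentPolynomial ℤ) (k : ℤ) : ℤ := (AddMonoidAlgebra.coeff f) k

/-- the degree `Deg f = max { |i| : coefficient of tⁱ in f is nonzero }` -/
def owpDeg (f : LaurentPolynomial ℤ) : ℕ := (AddMonoidAlgebra.coeff f).support.sup fun k => k.natAbs

/-- reversing the orientation of the knot: the cyclic order of the endpoints is
reversed, while signs and over/under data of the crossings are preserved -/
def reverse (D : ChordDiagram n) : ChordDiagram n where
  ep := D.ep.trans Fin.revPerm
  sign := D.sign
  sign_unit := D.sign_unit

/-- the mirror image: every crossing is switched, so every chord's over and under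
endpoints are exchanged and its sign is negated -/
def mirror (D : ChordDiagram n) : ChordDiagram n where
  ep := (Equiv.prodCongr (Equiv.refl (Fin n))
      ⟨fun b => !b, fun b => !b, Bool.not_not, Bool.not_not⟩).trans D.ep
  sign := fun i => -D.sign i
  sign_unit := fun i => (D.sign_unit i).elim
    (fun h => Or.inr (show -D.sign i = -1 by rw [h]))
    (fun h => Or.inl (show -D.sign i = 1 by rw [h]; ring))

/-! ### Planarity via the Euler characteristic of the carrier surface

The diagram determines a 4-valent graph (vertices = chords, edges = the `2*n` arcs of
the circle) together with a rotation system at each vertex, coming from the structure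
of a transversal crossing: for a positive crossing the counterclockwise order of the
four ends is (over-out, under-out, over-in, under-in), for a negative crossing it is
(over-out, under-in, over-in, under-out).  The diagram is realizable by a classical
(planar) knot diagram iff the resulting closed oriented carrier surface is a sphere,
i.e. iff `V - E + F = n - 2n + F = 2`.

Darts are encoded as pairs `(p, io) : Fin (2*n) × Bool`, meaning the end of an arc
at the vertex through the circle point `p`, with `io = true` for the outgoing arc
(from `p` to `p+1`) and `io = false` for the incoming arc (from `p-1` to `p`). -/

/-- the other endpoint of the chord through a given endpoint -/
def otherEnd (D : ChordDiagram n) (p : Fin (2 * n)) : Fin (2 * n) :=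
  D.ep ((D.ep.symm p).1, !(D.ep.symm p).2)

lemma otherEnd_otherEnd (D : ChordDiagram n) (p : Fin (2 * n)) :
    D.otherEnd (D.otherEnd p) = p := by
  simp [otherEnd]

/-- whether the rotation at the vertex toggles the in/out marker when passing from
the end at `p` to the end at the other endpoint of its chord -/
def tog (D : ChordDiagram n) (p : Fin (2 * n)) : Bool :=
  if D.sign (D.ep.symm p).1 = 1 then !(D.ep.symm p).2 else (D.ep.symm p).2

/-- the vertex rotation permutation on darts -/
def vertexPerm (D : ChordDiagram n) : Equiv.Perm (Fin (2 * n) × Bool) :=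
  Equiv.trans
    ⟨fun x => (x.1, xor x.2 (D.tog x.1)), fun x => (x.1, xor x.2 (D.tog x.1)),
      fun x => by simp [Bool.xor_assoc], fun x => by simp [Bool.xor_assoc]⟩
    ⟨fun x => (D.otherEnd x.1, x.2), fun x => (D.otherEnd x.1, x.2),
      fun x => by simp [otherEnd_otherEnd], fun x => by simp [otherEnd_otherEnd]⟩

/-- the edge involution on darts, matching the two ends of each arc -/
def arcPerm (D : ChordDiagram n) : Equiv.Perm (Fin (2 * n) × Bool) :=
  ⟨fun x => if x.2 then (finRotate (2 * n) x.1, false) else ((finRotate (2 * n)).symm x.1, true),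
   fun x => if x.2 then (finRotate (2 * n) x.1, false) else ((finRotate (2 * n)).symm x.1, true),
   fun x => by rcases x with ⟨p, _ | _⟩ <;> simp only [Bool.false_eq_true, if_false, if_true,
     Equiv.apply_symm_apply, Equiv.symm_apply_apply],
   fun x => by rcases x with ⟨p, _ | _⟩ <;> simp only [Bool.false_eq_true, if_false, if_true,
     Equiv.apply_symm_apply, Equiv.symm_apply_apply]⟩

/-- the face permutation on darts -/
def facePerm (D : ChordDiagram n) : Equiv.Perm (Fin (2 * n) × Bool) :=
  (D.arcPerm).trans D.vertexPerm

/-- the number of faces: the number of orbits of the face permutation -/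
noncomputable def faceCount (D : ChordDiagram n) : ℕ :=
  Nat.card (MulAction.orbitRel.Quotient (Subgroup.zpowers D.facePerm) (Fin (2 * n) × Bool))

/-- the chord diagram arises from a classical (planar) knot diagram: the carrier
surface has Euler characteristic `V - E + F = n - 2n + faceCount = 2` -/
def PlanarRealizable (D : ChordDiagram n) : Prop := D.faceCount = n + 2

end ChordDiagram

/-! ### Auxiliary material for the proof -/
set_option linter.unusedSectionVars false
set_option linter.unusedVariables false

namespace ChordDiagram

variable {n : ℕ}

section FinAux

lemma finRotate_eq {m : ℕ} [NeZero m] (p : Fin m) : finRotate m p = p + 1 := by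
  rcases m with _ | m
  · exact absurd rfl (NeZero.ne 0)
  · exact finRotate_succ_apply p

lemma finRotate_symm_eq {m : ℕ} [NeZero m] (p : Fin m) : (finRotate m).symm p = p - 1 := by
  rw [Equiv.symm_apply_eq, finRotate_eq, sub_add_cancel]

lemma val_add_one' {m : ℕ} [NeZero m] (p : Fin m) :
    ((p + 1 : Fin m).val = p.val + 1 ∧ p.val + 1 < m) ∨
      ((p + 1 : Fin m).val = 0 ∧ p.val + 1 = m) := by
  have hm : 0 < m := Nat.pos_of_ne_zero (NeZero.ne m)
  have hp := p.isLt
  have h1 : (1 : Fin m).val = 1 % m := Fin.val_one' m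
  have hadd : (p + 1 : Fin m).val = (p.val + (1 : Fin m).val) % m := Fin.val_add p 1
  rcases Nat.lt_or_ge (p.val + 1) m with h | h
  · left
    have hm2 : 1 < m := by omega
    rw [hadd, h1, Nat.mod_eq_of_lt hm2, Nat.mod_eq_of_lt h]
    exact ⟨rfl, h⟩
  · right
    have heq : p.val + 1 = m := by omega
    constructor
    · rcases Nat.eq_or_lt_of_le (Nat.one_le_iff_ne_zero.mpr (NeZero.ne m)) with h2 | h2
      · subst h2
        rw [hadd, h1]
        simp
      · rw [hadd, h1, Nat.mod_eq_of_lt h2, heq, Nat.mod_self]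
    · exact heq

lemma val_sub_one' {m : ℕ} [NeZero m] (p : Fin m) (hp : p ≠ 0) :
    (p - 1 : Fin m).val = p.val - 1 ∧ 1 ≤ p.val := by
  have h0 : (p - 1 : Fin m) + 1 = p := sub_add_cancel p 1
  have hv : p.val ≠ 0 := fun h => hp (Fin.ext h)
  rcases val_add_one' (p - 1 : Fin m) with ⟨h1, h2⟩ | ⟨h1, h2⟩
  · rw [h0] at h1
    omega
  · rw [h0] at h1
    omega

end FinAux

section RelposAux

variable [NeZero n]

instance : NeZero (2 * n) := ⟨by have := NeZero.ne n; omega⟩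

lemma relpos_eq (b x : Fin (2 * n)) :
    relpos b x = if b.val ≤ x.val then x.val - b.val else x.val + 2 * n - b.val := by
  unfold relpos
  have hx := x.isLt
  have hb := b.isLt
  rcases le_or_gt b.val x.val with h | h
  · rw [if_pos h]
    have h2 : x.val + 2 * n - b.val = (x.val - b.val) + 2 * n := by omega
    rw [h2, Nat.add_mod_right]
    exact Nat.mod_eq_of_lt (by omega)
  · rw [if_neg (not_le.mpr h)]
    exact Nat.mod_eq_of_lt (by omega)

lemma relpos_self (p : Fin (2 * n)) : relpos p p = 0 := by
  rw [relpos_eq, if_pos le_rfl, Nat.sub_self]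

lemma relpos_lt (b x : Fin (2 * n)) : relpos b x < 2 * n := by
  rw [relpos_eq]
  have hx := x.isLt
  have hb := b.isLt
  split_ifs <;> omega

lemma relpos_pos {p x : Fin (2 * n)} (h : x ≠ p) : 0 < relpos p x := by
  have hv : x.val ≠ p.val := fun hh => h (Fin.ext hh)
  rw [relpos_eq]
  have hx := x.isLt
  have hp := p.isLt
  split_ifs <;> omega

lemma relpos_succ_ne {p x : Fin (2 * n)} (h : x ≠ p) :
    relpos (p + 1) x + 1 = relpos p x := by
  have hv : x.val ≠ p.val := fun hh => h (Fin.ext hh)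
  rw [relpos_eq, relpos_eq]
  have hx := x.isLt
  have hp := p.isLt
  rcases val_add_one' p with ⟨h1, h2⟩ | ⟨h1, h2⟩ <;> rw [h1] <;> split_ifs <;> omega

lemma relpos_succ_self (p : Fin (2 * n)) : relpos (p + 1) p = 2 * n - 1 := by
  rw [relpos_eq]
  have hp := p.isLt
  rcases val_add_one' p with ⟨h1, h2⟩ | ⟨h1, h2⟩ <;> rw [h1] <;> split_ifs <;> omega

end RelposAux

section DiagramAux

variable [NeZero n] (D : ChordDiagram n)

lemma symm_over (i : Fin n) : D.ep.symm (D.over' i) = (i, true) := D.ep.symm_apply_apply _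

lemma symm_under (i : Fin n) : D.ep.symm (D.under i) = (i, false) := D.ep.symm_apply_apply _

lemma otherEnd_over (i : Fin n) : D.otherEnd (D.over' i) = D.under i := by
  simp [otherEnd, over', under]

lemma otherEnd_under (i : Fin n) : D.otherEnd (D.under i) = D.over' i := by
  simp [otherEnd, over', under]

lemma over_ne_under (i : Fin n) : D.over' i ≠ D.under i := by
  intro h
  have := D.ep.injective h
  simp at this

lemma tog_over_pos {i : Fin n} (hs : D.sign i = 1) : D.tog (D.over' i) = false := by
  simp [tog, over', hs]

lemma tog_over_neg {i : Fin n} (hs : D.sign i = -1) : D.tog (D.over' i) = true := by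
  simp [tog, over', hs]

lemma tog_under_pos {i : Fin n} (hs : D.sign i = 1) : D.tog (D.under i) = true := by
  simp [tog, under, hs]

lemma tog_under_neg {i : Fin n} (hs : D.sign i = -1) : D.tog (D.under i) = false := by
  simp [tog, under, hs]

lemma tog_otherEnd (p : Fin (2 * n)) : D.tog (D.otherEnd p) = !(D.tog p) := by
  by_cases hs : D.sign (D.ep.symm p).1 = 1 <;>
    simp [tog, otherEnd, hs]

lemma vertexPerm_apply (p : Fin (2 * n)) (b : Bool) :
    D.vertexPerm (p, b) = (D.otherEnd p, xor b (D.tog p)) := rfl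

lemma facePerm_true (p : Fin (2 * n)) :
    D.facePerm (p, true) = (D.otherEnd (p + 1), D.tog (p + 1)) := by
  show D.vertexPerm (D.arcPerm (p, true)) = _
  simp [arcPerm, finRotate_eq, vertexPerm_apply]

lemma facePerm_false (p : Fin (2 * n)) :
    D.facePerm (p, false) = (D.otherEnd (p - 1), !(D.tog (p - 1))) := by
  show D.vertexPerm (D.arcPerm (p, false)) = _
  simp [arcPerm, finRotate_symm_eq, vertexPerm_apply]

lemma arcPerm_arcPerm (d : Fin (2 * n) × Bool) : D.arcPerm (D.arcPerm d) = d := by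
  rcases d with ⟨p, b⟩
  cases b <;> simp [arcPerm]

/-- Lemma A: the recurrence for the arc labels. -/
lemma arcLabel_succ (p : Fin (2 * n)) :
    D.arcLabel (p + 1) = D.arcLabel p +
      (if (D.ep.symm p).2 then -D.sign (D.ep.symm p).1 else D.sign (D.ep.symm p).1) := by
  classical
  have hp : D.ep ((D.ep.symm p).1, (D.ep.symm p).2) = p := by
    rw [Prod.mk.eta]; exact D.ep.apply_symm_apply p
  set i0 := (D.ep.symm p).1 with hi0
  set b0 := (D.ep.symm p).2 with hb0
  have key : ∀ i : Fin n, i ≠ i0 →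
      ((if relpos (p + 1) (D.over' i) < relpos (p + 1) (D.under i) then D.sign i else 0)
        - (if relpos p (D.over' i) < relpos p (D.under i) then D.sign i else 0)) = 0 := by
    intro i hi
    have ho : D.over' i ≠ p := by
      intro hh
      exact hi (congrArg Prod.fst (D.ep.injective (hh.trans hp.symm)))
    have hu : D.under i ≠ p := by
      intro hh
      exact hi (congrArg Prod.fst (D.ep.injective (hh.trans hp.symm)))
    have h1 := relpos_succ_ne (p := p) ho
    have h2 := relpos_succ_ne (p := p) hu
    have hiff : (relpos (p + 1) (D.over' i) < relpos (p + 1) (D.under i)) ↔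
        (relpos p (D.over' i) < relpos p (D.under i)) := by omega
    rw [if_congr hiff rfl rfl, sub_self]
  have main : (∑ i : Fin n,
      ((if relpos (p + 1) (D.over' i) < relpos (p + 1) (D.under i) then D.sign i else 0)
        - (if relpos p (D.over' i) < relpos p (D.under i) then D.sign i else 0)))
      = (if b0 then -D.sign i0 else D.sign i0) := by
    rw [Finset.sum_eq_single i0]
    · cases hb : b0
      · -- p is the under endpoint of i0
        rw [hb] at hp
        have hover : D.over' i0 ≠ p := by
          intro hh
          have := D.ep.injective (hh.trans hp.symm)
          simp at this
        have hP : D.under i0 = p := hp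
        have c1 : ¬ relpos p (D.over' i0) < relpos p (D.under i0) := by
          rw [hP, relpos_self]
          omega
        have c2 : relpos (p + 1) (D.over' i0) < relpos (p + 1) (D.under i0) := by
          rw [hP, relpos_succ_self]
          have := relpos_succ_ne (p := p) hover
          have := relpos_lt p (D.over' i0)
          omega
        rw [if_pos c2, if_neg c1]
        simp
      · -- p is the over endpoint of i0
        rw [hb] at hp
        have hunder : D.under i0 ≠ p := by
          intro hh
          have := D.ep.injective (hh.trans hp.symm)
          simp at this
        have hP : D.over' i0 = p := hp
        have c1 : relpos p (D.over' i0) < relpos p (D.under i0) := by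
          rw [hP, relpos_self]
          exact relpos_pos hunder
        have c2 : ¬ relpos (p + 1) (D.over' i0) < relpos (p + 1) (D.under i0) := by
          rw [hP, relpos_succ_self]
          have := relpos_succ_ne (p := p) hunder
          have := relpos_lt p (D.under i0)
          omega
        rw [if_pos c1, if_neg c2]
        simp
    · intro i _ hi
      exact key i hi
    · intro hmem
      exact absurd (Finset.mem_univ i0) hmem
  unfold arcLabel
  rw [Finset.sum_filter, Finset.sum_filter]
  rw [Finset.sum_sub_distrib] at main
  omega

end DiagramAux

section GammaAux

variable [NeZero n] (D : ChordDiagram n)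

/-- Lemma B: the jump relation for a face-constant Alexander-type numbering. -/
lemma gamma_jump (γ : Fin (2 * n) × Bool → ℚ)
    (hface : ∀ d, γ (D.facePerm d) = γ d)
    (hstep : ∀ p : Fin (2 * n), γ (p, true) = γ (p + 1, false) - 1)
    (p : Fin (2 * n)) :
    γ (p, true) - γ (p - 1, true) =
      (if (D.ep.symm p).2 then -(D.sign (D.ep.symm p).1 : ℚ) else (D.sign (D.ep.symm p).1 : ℚ)) := by
  classical
  have hp : D.ep ((D.ep.symm p).1, (D.ep.symm p).2) = p := by
    rw [Prod.mk.eta]; exact D.ep.apply_symm_apply p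
  set i := (D.ep.symm p).1 with hi
  set b := (D.ep.symm p).2 with hb
  -- the eight local relations around the chord `i`
  have hA1P : γ (D.over' i - 1, true) = γ (D.under i, D.tog (D.over' i)) := by
    have h := hface (D.over' i - 1, true)
    rw [facePerm_true, sub_add_cancel, otherEnd_over] at h
    exact h.symm
  have hA1Q : γ (D.under i - 1, true) = γ (D.over' i, D.tog (D.under i)) := by
    have h := hface (D.under i - 1, true)
    rw [facePerm_true, sub_add_cancel, otherEnd_under] at h
    exact h.symm
  have hA2P : γ (D.over' i + 1, false) = γ (D.under i, !(D.tog (D.over' i))) := by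
    have h := hface (D.over' i + 1, false)
    rw [facePerm_false, add_sub_cancel_right, otherEnd_over] at h
    exact h.symm
  have hA2Q : γ (D.under i + 1, false) = γ (D.over' i, !(D.tog (D.under i))) := by
    have h := hface (D.under i + 1, false)
    rw [facePerm_false, add_sub_cancel_right, otherEnd_under] at h
    exact h.symm
  have e1 : γ (D.over' i - 1, true) = γ (D.over' i, false) - 1 := by
    have h := hstep (D.over' i - 1)
    rw [sub_add_cancel] at h
    exact h
  have e2 : γ (D.under i - 1, true) = γ (D.under i, false) - 1 := by
    have h := hstep (D.under i - 1)
    rw [sub_add_cancel] at h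
    exact h
  have e3 : γ (D.over' i, true) = γ (D.over' i + 1, false) - 1 := hstep _
  have e4 : γ (D.under i, true) = γ (D.under i + 1, false) - 1 := hstep _
  rcases D.sign_unit i with hs | hs
  · rw [D.tog_over_pos hs] at hA1P hA2P
    rw [D.tog_under_pos hs] at hA1Q hA2Q
    simp only [Bool.not_false, Bool.not_true] at hA2P hA2Q
    cases hbv : b
    · -- p is the under endpoint
      rw [hbv] at hp
      have hP : D.under i = p := hp
      rw [← hP, if_neg (by decide), hs]
      push_cast
      linarith
    · rw [hbv] at hp
      have hP : D.over' i = p := hp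
      rw [← hP, if_pos rfl, hs]
      push_cast
      linarith
  · rw [D.tog_over_neg hs] at hA1P hA2P
    rw [D.tog_under_neg hs] at hA1Q hA2Q
    simp only [Bool.not_false, Bool.not_true] at hA2P hA2Q
    cases hbv : b
    · rw [hbv] at hp
      have hP : D.under i = p := hp
      rw [← hP, if_neg (by decide), hs]
      push_cast
      linarith
    · rw [hbv] at hp
      have hP : D.over' i = p := hp
      rw [← hP, if_pos rfl, hs]
      push_cast
      linarith

open Fin.NatCast in
/-- The value of every chord is `1` as soon as a face-constant Alexander-type
numbering exists. -/
lemma chordVal_eq_one_of_gamma (γ : Fin (2 * n) × Bool → ℚ)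
    (hface : ∀ d, γ (D.facePerm d) = γ d)
    (hstep : ∀ p : Fin (2 * n), γ (p, true) = γ (p + 1, false) - 1)
    (i : Fin n) : D.chordVal i = 1 := by
  classical
  -- constancy of `γ (·, true) - arcLabel (· + 1)`
  have hjump := D.gamma_jump γ hface hstep
  have hstepc : ∀ p : Fin (2 * n),
      γ (p + 1, true) - (D.arcLabel (p + 1 + 1) : ℚ) = γ (p, true) - (D.arcLabel (p + 1) : ℚ) := by
    intro p
    have h1 := hjump (p + 1)
    rw [add_sub_cancel_right] at h1
    have h2 := D.arcLabel_succ (p + 1)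
    have h3 : ((D.arcLabel (p + 1 + 1) : ℤ) : ℚ) = (D.arcLabel (p + 1) : ℚ) +
        (if (D.ep.symm (p + 1)).2 then -(D.sign (D.ep.symm (p + 1)).1 : ℚ)
          else (D.sign (D.ep.symm (p + 1)).1 : ℚ)) := by
      rw [h2]
      push_cast
      split_ifs <;> push_cast <;> ring
    rw [h3]
    linarith
  have hconst : ∀ p q : Fin (2 * n),
      γ (p, true) - (D.arcLabel (p + 1) : ℚ) = γ (q, true) - (D.arcLabel (q + 1) : ℚ) := by
    have key : ∀ (k : ℕ) (p : Fin (2 * n)),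
        γ (p + (k : Fin (2 * n)), true) - (D.arcLabel (p + (k : Fin (2 * n)) + 1) : ℚ)
          = γ (p, true) - (D.arcLabel (p + 1) : ℚ) := by
      intro k
      induction k with
      | zero => intro p; simp
      | succ k ih =>
        intro p
        have hcast : ((k + 1 : ℕ) : Fin (2 * n)) = (k : Fin (2 * n)) + 1 := by push_cast; ring
        rw [hcast, ← add_assoc, hstepc (p + (k : Fin (2 * n))), ih]
    intro p q
    have h := key ((q - p : Fin (2 * n)).val) p
    rw [Fin.cast_val_eq_self (q - p)] at h
    rw [show p + (q - p) = q from add_sub_cancel p q] at h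
    exact h.symm
  -- the difference of the two arc labels at chord `i`
  have hdiff : (D.arcLabel (D.over' i) : ℚ) - (D.arcLabel (D.under i) : ℚ)
      = γ (D.over' i - 1, true) - γ (D.under i - 1, true) := by
    have h := hconst (D.over' i - 1) (D.under i - 1)
    rw [sub_add_cancel, sub_add_cancel] at h
    linarith
  rcases D.sign_unit i with hs | hs
  · -- positive chord
    have hA1P : γ (D.over' i - 1, true) = γ (D.under i, false) := by
      have h := hface (D.over' i - 1, true)
      rw [facePerm_true, sub_add_cancel, otherEnd_over, D.tog_over_pos hs] at h
      exact h.symm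
    have e2 : γ (D.under i - 1, true) = γ (D.under i, false) - 1 := by
      have h := hstep (D.under i - 1)
      rw [sub_add_cancel] at h
      exact h
    have hval : (D.arcLabel (D.over' i) : ℚ) - (D.arcLabel (D.under i) : ℚ) = 1 := by
      rw [hdiff, hA1P, e2]; ring
    have hZ : D.arcLabel (D.over' i) - D.arcLabel (D.under i) = 1 := by
      exact_mod_cast (by push_cast; linarith : ((D.arcLabel (D.over' i) - D.arcLabel (D.under i) : ℤ) : ℚ) = 1)
    unfold chordVal
    rw [if_pos hs]
    exact hZ
  · -- negative chord
    have hA1P : γ (D.over' i - 1, true) = γ (D.under i, true) := by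
      have h := hface (D.over' i - 1, true)
      rw [facePerm_true, sub_add_cancel, otherEnd_over, D.tog_over_neg hs] at h
      exact h.symm
    have hjQ := D.gamma_jump γ hface hstep (D.under i)
    rw [symm_under] at hjQ
    simp only [if_neg Bool.false_ne_true] at hjQ
    rw [hs] at hjQ
    push_cast at hjQ
    have hval : (D.arcLabel (D.over' i) : ℚ) - (D.arcLabel (D.under i) : ℚ) = -1 := by
      rw [hdiff, hA1P]
      linarith
    have hZ : D.arcLabel (D.over' i) - D.arcLabel (D.under i) = -1 := by
      exact_mod_cast (by push_cast; linarith : ((D.arcLabel (D.over' i) - D.arcLabel (D.under i) : ℤ) : ℚ) = -1)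
    unfold chordVal
    rw [if_neg (by rw [hs]; decide), hs]
    omega

end GammaAux

section Existence

open Module LinearMap

variable [NeZero n]

open Fin.NatCast in
/-- On a planar-realizable diagram there is an Alexander-type numbering of faces. -/
lemma exists_gamma (D : ChordDiagram n) (h : D.PlanarRealizable) :
    ∃ γ : Fin (2 * n) × Bool → ℚ, (∀ d, γ (D.facePerm d) = γ d) ∧
      (∀ p : Fin (2 * n), γ (p, true) = γ (p + 1, false) - 1) := by
  classical
  have hn : 1 ≤ n := Nat.one_le_iff_ne_zero.mpr (NeZero.ne n)
  set G := Subgroup.zpowers D.facePerm with hG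
  let Q := MulAction.orbitRel.Quotient G (Fin (2 * n) × Bool)
  haveI : Fintype Q := Fintype.ofFinite _
  let mk : Fin (2 * n) × Bool → Q := fun d => Quotient.mk (MulAction.orbitRel G _) d
  have hmk : ∀ d, mk (D.facePerm d) = mk d := fun d =>
    Quotient.sound ⟨⟨D.facePerm, Subgroup.mem_zpowers _⟩, rfl⟩
  have hsurj : ∀ F : Q, ∃ d, mk d = F := fun F => Quot.exists_rep F
  have hcard : Fintype.card Q = n + 2 := by
    rw [← Nat.card_eq_fintype_card]; exact h
  -- the three linear maps
  let M : (Q → ℚ) →ₗ[ℚ] (Fin (2 * n) → ℚ) :=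
    { toFun := fun β a => β (mk (a, true)) - β (mk (a + 1, false))
      map_add' := fun β₁ β₂ => by funext a; simp [Pi.add_apply]; ring
      map_smul' := fun c β => by funext a; simp [Pi.smul_apply, smul_eq_mul]; ring }
  let Φ : (Fin (2 * n) → ℚ) →ₗ[ℚ] (Fin n → ℚ) :=
    { toFun := fun x j => x (D.over' j) + x (D.under j) - x (D.over' j - 1) - x (D.under j - 1)
      map_add' := fun x y => by funext j; simp [Pi.add_apply]; ring
      map_smul' := fun c x => by funext j; simp [Pi.smul_apply, smul_eq_mul]; ring }
  let L : (Fin n → ℚ) →ₗ[ℚ] ℚ :=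
    { toFun := fun y => ∑ j, y j
      map_add' := fun x y => by simp [Pi.add_apply, Finset.sum_add_distrib]
      map_smul' := fun c x => by simp [Pi.smul_apply, smul_eq_mul, Finset.mul_sum] }
  -- every face boundary is a cycle
  have hRM : LinearMap.range M ≤ LinearMap.ker Φ := by
    rintro _ ⟨β, rfl⟩
    rw [LinearMap.mem_ker]
    funext j
    have c1 : D.over' j - 1 + 1 = D.over' j := sub_add_cancel _ _
    have c2 : D.under j - 1 + 1 = D.under j := sub_add_cancel _ _
    have r1 : β (mk (D.facePerm (D.over' j - 1, true))) = β (mk (D.over' j - 1, true)) :=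
      congrArg β (hmk _)
    have r2 : β (mk (D.facePerm (D.under j - 1, true))) = β (mk (D.under j - 1, true)) :=
      congrArg β (hmk _)
    have r3 : β (mk (D.facePerm (D.over' j + 1, false))) = β (mk (D.over' j + 1, false)) :=
      congrArg β (hmk _)
    have r4 : β (mk (D.facePerm (D.under j + 1, false))) = β (mk (D.under j + 1, false)) :=
      congrArg β (hmk _)
    rw [facePerm_true, c1, otherEnd_over] at r1
    rw [facePerm_true, c2, otherEnd_under] at r2
    rw [facePerm_false, add_sub_cancel_right, otherEnd_over] at r3
    rw [facePerm_false, add_sub_cancel_right, otherEnd_under] at r4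
    show (β (mk (D.over' j, true)) - β (mk (D.over' j + 1, false)))
        + (β (mk (D.under j, true)) - β (mk (D.under j + 1, false)))
        - (β (mk (D.over' j - 1, true)) - β (mk (D.over' j - 1 + 1, false)))
        - (β (mk (D.under j - 1, true)) - β (mk (D.under j - 1 + 1, false))) = 0
    rw [c1, c2, ← r1, ← r2, ← r3, ← r4]
    cases hb1 : D.tog (D.over' j) <;> cases hb2 : D.tog (D.under j) <;>
      simp only [Bool.not_false, Bool.not_true] <;> ring
  -- the image of the incidence map is the hyperplane of zero-sum vectors
  have hsum1 : ∀ x : Fin (2 * n) → ℚ, (∑ j, (x (D.over' j) + x (D.under j))) = ∑ p, x p := by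
    intro x
    rw [← Equiv.sum_comp D.ep x, Fintype.sum_prod_type]
    exact Finset.sum_congr rfl fun j _ => by rw [Fintype.sum_bool]; rfl
  have hsum2 : ∀ x : Fin (2 * n) → ℚ,
      (∑ j, (x (D.over' j - 1) + x (D.under j - 1))) = ∑ p, x p := by
    intro x
    have h1 := hsum1 (fun p => x (p - 1))
    rw [h1]
    exact Fintype.sum_equiv (Equiv.subRight (1 : Fin (2 * n))) _ x (fun p => rfl)
  have hΦL : LinearMap.range Φ = LinearMap.ker L := by
    apply le_antisymm
    · rintro _ ⟨x, rfl⟩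
      rw [LinearMap.mem_ker]
      show (∑ j, (x (D.over' j) + x (D.under j) - x (D.over' j - 1) - x (D.under j - 1))) = 0
      have : (∑ j, (x (D.over' j) + x (D.under j) - x (D.over' j - 1) - x (D.under j - 1)))
          = (∑ j, (x (D.over' j) + x (D.under j)))
            - (∑ j, (x (D.over' j - 1) + x (D.under j - 1))) := by
        rw [← Finset.sum_sub_distrib]
        exact Finset.sum_congr rfl fun j _ => by ring
      rw [this, hsum1, hsum2, sub_self]
    · intro y hy
      rw [LinearMap.mem_ker] at hy
      have hy' : (∑ j, y j) = 0 := hy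
      set v : Fin (2 * n) → ℚ := fun p => y ((D.ep.symm p).1) / 2 with hv
      have hvsum : (∑ p, v p) = 0 := by
        have h1 : (∑ p, v p) = ∑ d : Fin n × Bool, y d.1 / 2 :=
          Equiv.sum_comp D.ep.symm (fun d => y d.1 / 2)
        rw [h1, Fintype.sum_prod_type]
        have h2 : ∀ j : Fin n, (∑ b : Bool, y (j, b).1 / 2) = y j := by
          intro j
          rw [Fintype.sum_bool]
          show y j / 2 + y j / 2 = y j
          ring
        rw [Finset.sum_congr rfl fun j _ => h2 j]
        exact hy'
      set t : Fin (2 * n) → ℚ :=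
        fun p => ∑ q ∈ univ.filter (fun q : Fin (2 * n) => q.val ≤ p.val), v q with ht
      have htstep : ∀ p : Fin (2 * n), t p - t (p - 1) = v p := by
        intro p
        by_cases hp : p = 0
        · subst hp
          have h0 : t 0 = v 0 := by
            show (∑ q ∈ univ.filter (fun q : Fin (2 * n) => q.val ≤ (0 : Fin (2 * n)).val), v q)
                = v 0
            have hset : univ.filter (fun q : Fin (2 * n) => q.val ≤ (0 : Fin (2 * n)).val)
                = {0} := by
              ext q
              simp only [Finset.mem_filter, Finset.mem_univ, true_and, Finset.mem_singleton,
                Fin.val_zero, Nat.le_zero]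
              exact ⟨fun hq => Fin.ext hq, fun hq => by simp [hq]⟩
            rw [hset, Finset.sum_singleton]
          have hlastval : ((0 : Fin (2 * n)) - 1).val = 2 * n - 1 := by
            rcases val_add_one' ((0 : Fin (2 * n)) - 1) with ⟨h1, h2⟩ | ⟨h1, h2⟩
            · rw [sub_add_cancel] at h1
              simp at h1
            · omega
          have hlast : t ((0 : Fin (2 * n)) - 1) = 0 := by
            show (∑ q ∈ univ.filter
                (fun q : Fin (2 * n) => q.val ≤ ((0 : Fin (2 * n)) - 1).val), v q) = 0
            have hset : univ.filter
                (fun q : Fin (2 * n) => q.val ≤ ((0 : Fin (2 * n)) - 1).val) = univ := by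
              ext q
              simp only [Finset.mem_filter, Finset.mem_univ, true_and, iff_true]
              have := q.isLt
              omega
            rw [hset]
            exact hvsum
          rw [h0, hlast, sub_zero]
        · obtain ⟨hval, hge⟩ := val_sub_one' p hp
          have hsplit : univ.filter (fun q : Fin (2 * n) => q.val ≤ p.val)
              = insert p (univ.filter (fun q : Fin (2 * n) => q.val ≤ p.val - 1)) := by
            ext q
            simp only [Finset.mem_insert, Finset.mem_filter, Finset.mem_univ, true_and]
            constructor
            · intro hle
              rcases Nat.lt_or_ge q.val p.val with h' | h'
              · right; omega
              · left; exact Fin.ext (by omega)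
            · rintro (rfl | hle)
              · exact le_rfl
              · omega
          have hnot : p ∉ univ.filter (fun q : Fin (2 * n) => q.val ≤ p.val - 1) := by
            simp only [Finset.mem_filter, Finset.mem_univ, true_and]
            omega
          show (∑ q ∈ univ.filter (fun q : Fin (2 * n) => q.val ≤ p.val), v q)
              - (∑ q ∈ univ.filter (fun q : Fin (2 * n) => q.val ≤ (p - 1).val), v q) = v p
          rw [hval, hsplit, Finset.sum_insert hnot]
          ring
      refine ⟨t, ?_⟩
      funext j
      show t (D.over' j) + t (D.under j) - t (D.over' j - 1) - t (D.under j - 1) = y j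
      have h1 := htstep (D.over' j)
      have h2 := htstep (D.under j)
      have hv1 : v (D.over' j) = y j / 2 := by
        show y ((D.ep.symm (D.over' j)).1) / 2 = y j / 2
        rw [symm_over]
      have hv2 : v (D.under j) = y j / 2 := by
        show y ((D.ep.symm (D.under j)).1) / 2 = y j / 2
        rw [symm_under]
      rw [hv1] at h1
      rw [hv2] at h2
      linarith
  -- the kernel of `M` consists of the constants
  have hkerM : finrank ℚ (LinearMap.ker M) ≤ 1 := by
    have hle : LinearMap.ker M ≤ Submodule.span ℚ {(fun _ => (1 : ℚ) : Q → ℚ)} := by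
      intro β hβ
      rw [LinearMap.mem_ker] at hβ
      have hβ' : ∀ a : Fin (2 * n), β (mk (a, true)) = β (mk (a + 1, false)) := by
        intro a
        have h1 : β (mk (a, true)) - β (mk (a + 1, false)) = 0 := congrFun hβ a
        linarith
      set g : Fin (2 * n) × Bool → ℚ := fun d => β (mk d) with hg
      have hgφ : ∀ d, g (D.facePerm d) = g d := fun d => congrArg β (hmk d)
      have hgarc : ∀ d, g (D.arcPerm d) = g d := by
        rintro ⟨p, b⟩
        cases b
        · have harc : D.arcPerm (p, false) = (p - 1, true) := by
            simp [arcPerm, finRotate_symm_eq]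
          rw [harc]
          have h1 := hβ' (p - 1)
          rw [sub_add_cancel] at h1
          exact h1
        · have harc : D.arcPerm (p, true) = (p + 1, false) := by
            simp [arcPerm, finRotate_eq]
          rw [harc]
          exact (hβ' p).symm
      have hgV : ∀ d, g (D.vertexPerm d) = g d := by
        intro d
        have h1 : D.facePerm (D.arcPerm d) = D.vertexPerm d := by
          show D.vertexPerm (D.arcPerm (D.arcPerm d)) = D.vertexPerm d
          rw [arcPerm_arcPerm]
        rw [← h1, hgφ, hgarc]
      have hflip : ∀ (p : Fin (2 * n)) (b : Bool), g (p, b) = g (p, !b) := by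
        intro p b
        have k1 := hgV (p, b)
        rw [vertexPerm_apply] at k1
        have k2 := hgV (D.otherEnd p, xor b (D.tog p))
        rw [vertexPerm_apply, otherEnd_otherEnd, tog_otherEnd] at k2
        have hxor : xor (xor b (D.tog p)) (!(D.tog p)) = !b := by
          cases b <;> cases D.tog p <;> rfl
        rw [hxor] at k2
        rw [k2]
        exact k1.symm
      have hstep2 : ∀ p : Fin (2 * n), g (p + 1, true) = g (p, true) := by
        intro p
        have h1 : g (p, true) = g (p + 1, false) := hβ' p
        have h2 := hflip (p + 1) true
        rw [h2]
        exact h1.symm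
      have htrue : ∀ p q : Fin (2 * n), g (p, true) = g (q, true) := by
        have key : ∀ (k : ℕ) (p : Fin (2 * n)), g (p + (k : Fin (2 * n)), true) = g (p, true) := by
          intro k
          induction k with
          | zero => intro p; simp
          | succ k ih =>
            intro p
            have hcast : ((k + 1 : ℕ) : Fin (2 * n)) = (k : Fin (2 * n)) + 1 := by
              push_cast; ring
            rw [hcast, ← add_assoc, hstep2, ih]
        intro p q
        have hkey := key ((q - p : Fin (2 * n)).val) p
        rw [Fin.cast_val_eq_self (q - p), show p + (q - p) = q from add_sub_cancel p q] at hkey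
        exact hkey.symm
      have hall : ∀ d d' : Fin (2 * n) × Bool, g d = g d' := by
        have hb : ∀ (p : Fin (2 * n)) (b : Bool), g (p, b) = g (p, true) := by
          intro p b
          cases b
          · exact hflip p false
          · rfl
        rintro ⟨p, b⟩ ⟨q, b'⟩
        rw [hb p b, hb q b']
        exact htrue p q
      rw [Submodule.mem_span_singleton]
      refine ⟨β (mk (0, true)), ?_⟩
      funext F
      obtain ⟨d, rfl⟩ := hsurj F
      show β (mk (0, true)) * 1 = β (mk d)
      rw [mul_one]
      exact hall (0, true) d
    have hone : (fun _ => (1 : ℚ) : Q → ℚ) ≠ 0 := by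
      intro hcon
      have := congrFun hcon (mk (0, true))
      norm_num at this
    calc finrank ℚ (LinearMap.ker M)
        ≤ finrank ℚ (Submodule.span ℚ {(fun _ => (1 : ℚ) : Q → ℚ)}) :=
          Submodule.finrank_mono hle
      _ = 1 := finrank_span_singleton hone
  -- dimension count
  have hcardQ : finrank ℚ (Q → ℚ) = n + 2 := by
    rw [Module.finrank_pi]; exact hcard
  have eM := LinearMap.finrank_range_add_finrank_ker M
  rw [hcardQ] at eM
  have eΦ := LinearMap.finrank_range_add_finrank_ker Φ
  rw [Module.finrank_pi, Fintype.card_fin] at eΦ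
  have eL := LinearMap.finrank_range_add_finrank_ker L
  rw [Module.finrank_pi, Fintype.card_fin] at eL
  have hLtop : LinearMap.range L = ⊤ := by
    rw [LinearMap.range_eq_top]
    intro c
    refine ⟨fun _ => c / n, ?_⟩
    show (∑ _j : Fin n, c / (n : ℚ)) = c
    rw [Finset.sum_const, Finset.card_univ, Fintype.card_fin, nsmul_eq_mul]
    field_simp
  have hrL : finrank ℚ (LinearMap.range L) = 1 := by
    rw [hLtop, finrank_top, Module.finrank_self]
  have hkΦ : finrank ℚ (LinearMap.ker Φ) = n + 1 := by
    have hrΦ : finrank ℚ (LinearMap.range Φ) = n - 1 := by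
      rw [hΦL]; omega
    omega
  have hfinal : LinearMap.range M = LinearMap.ker Φ :=
    Submodule.eq_of_le_of_finrank_le hRM (by rw [hkΦ]; omega)
  have hmem : (fun _ => (-1 : ℚ) : Fin (2 * n) → ℚ) ∈ LinearMap.range M := by
    rw [hfinal, LinearMap.mem_ker]
    funext j
    show (-1 : ℚ) + (-1) - (-1) - (-1) = 0
    ring
  obtain ⟨β, hβ⟩ := hmem
  refine ⟨fun d => β (mk d), fun d => congrArg β (hmk d), fun p => ?_⟩
  have h1 : β (mk (p, true)) - β (mk (p + 1, false)) = -1 := congrFun hβ p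
  show β (mk (p, true)) = β (mk (p + 1, false)) - 1
  linarith

end Existence

end ChordDiagram


open ChordDiagram

/-- for every classical (planar-realizable) knot diagram every
crossing `c` satisfies `N(c) = 1`; consequently `Σ_c w(c) t^{N(c)} = w(K) · t` and
the invariant `F_K(t) = Σ_c w(c) t^{N(c)} - w(K) t` vanishes identically. -/
theorem stmt_17 {n : ℕ} (D : ChordDiagram n) (h : D.PlanarRealizable) :
    (∀ i : Fin n, D.chordVal i = 1) ∧
    (∑ i : Fin n, C (D.sign i) * T (D.chordVal i)) = C (∑ i : Fin n, D.sign i) * T 1 ∧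
    (∑ i : Fin n, C (D.sign i) * T (D.chordVal i)) - C (∑ i : Fin n, D.sign i) * T 1 = 0 := by
  have h1 : ∀ i : Fin n, D.chordVal i = 1 := by
    intro i
    haveI : NeZero n := ⟨fun hc => (hc ▸ i).elim0⟩
    obtain ⟨γ, hface, hstep⟩ := D.exists_gamma h
    exact D.chordVal_eq_one_of_gamma γ hface hstep i
  have h2 : (∑ i : Fin n, C (D.sign i) * T (D.chordVal i))
      = C (∑ i : Fin n, D.sign i) * T 1 := by
    calc (∑ i : Fin n, C (D.sign i) * T (D.chordVal i))
        = ∑ i : Fin n, C (D.sign i) * T 1 :=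
          Finset.sum_congr rfl fun i _ => by rw [h1 i]
      _ = (∑ i : Fin n, C (D.sign i)) * T 1 := (Finset.sum_mul _ _ _).symm
      _ = C (∑ i : Fin n, D.sign i) * T 1 := by rw [map_sum]
  exact ⟨h1, h2, by rw [h2, sub_self]⟩
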